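/- Let Q₁ be a d₁×d₁ complex matrix and Q₂ a d₂×d₂ complex matrix such that the Kronecker product Q₁ ⊗ Q₂ is unitary. Then there exists a positive real number a such that (1/√a)·Q₁ and √a·Q₂ are both unitary matrices. -/

import Mathlib

open Matrix Kronecker

lemma kron_conjTranspose {d₁ d₂ : ℕ} (M : Matrix (Fin d₁) (Fin d₁) ℂ)
    (N : Matrix (Fin d₂) (Fin d₂) ℂ) : (M ⊗ₖ N)ᴴ = Mᴴ ⊗ₖ Nᴴ := by
  ext ⟨i, k⟩ ⟨j, l⟩
  simp [conjTranspose_apply, mul_comm]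

/-- If the Kronecker product `Q₁ ⊗ Q₂` of square complex matrices is unitary, then there
is a positive real `a` such that `(1/√a)·Q₁` and `√a·Q₂` are both unitary. -/
theorem factors_unitary_of_kronecker_unitary {d₁ d₂ : ℕ} (hd₁ : 1 ≤ d₁) (hd₂ : 1 ≤ d₂)
    (Q₁ : Matrix (Fin d₁) (Fin d₁) ℂ) (Q₂ : Matrix (Fin d₂) (Fin d₂) ℂ)
    (h : (Q₁ ⊗ₖ Q₂) * (Q₁ ⊗ₖ Q₂)ᴴ = 1) :
    ∃ a : ℝ, 0 < a ∧
      ((1 / (Real.sqrt a : ℂ)) • Q₁) * ((1 / (Real.sqrt a : ℂ)) • Q₁)ᴴ = 1 ∧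
      (((Real.sqrt a : ℂ)) • Q₂) * (((Real.sqrt a : ℂ)) • Q₂)ᴴ = 1 := by
  haveI : NeZero d₁ := ⟨by omega⟩
  haveI : NeZero d₂ := ⟨by omega⟩
  set A := Q₁ * Q₁ᴴ with hA
  set B := Q₂ * Q₂ᴴ with hB
  have hAB : A ⊗ₖ B = 1 := by
    rw [hA, hB, mul_kronecker_mul, ← kron_conjTranspose, h]
  have key : ∀ (i j : Fin d₁) (k l : Fin d₂),
      A i j * B k l = if i = j ∧ k = l then 1 else 0 := by
    intro i j k l
    have := congrFun (congrFun hAB (i, k)) (j, l)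
    simpa [kroneckerMap_apply, Matrix.one_apply, Prod.ext_iff] using this
  -- diagonal entries of A are nonnegative reals
  have hdiagA : ∀ i, 0 ≤ (A i i).re ∧ (A i i).im = 0 := by
    intro i
    have : A i i = ∑ m, Q₁ i m * star (Q₁ i m) := by
      simp [hA, Matrix.mul_apply, conjTranspose_apply, mul_comm]
    rw [this]
    constructor
    · rw [Complex.re_sum]
      exact Finset.sum_nonneg fun m _ => by
        rw [Complex.star_def, Complex.mul_conj]
        simp [Complex.ofReal_re, Complex.normSq_nonneg]
    · rw [Complex.im_sum]
      exact Finset.sum_eq_zero fun m _ => by rw [Complex.star_def, Complex.mul_conj]; simp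
  have h00 : A 0 0 * B 0 0 = 1 := by simpa using key 0 0 0 0
  have hA0 : A 0 0 ≠ 0 := fun hz => by simp [hz] at h00
  have hB0 : B 0 0 ≠ 0 := fun hz => by simp [hz] at h00
  set a : ℝ := (A 0 0).re with ha
  have haC : (a : ℂ) = A 0 0 := by
    have := (hdiagA 0).2
    apply Complex.ext <;> simp [ha, this]
  have hapos : 0 < a := by
    rcases lt_or_eq_of_le (hdiagA 0).1 with h' | h'
    · exact h'
    · exact absurd (show A 0 0 = 0 by rw [← haC, ha, ← h']; simp) hA0
  -- A = a • 1
  have hAeq : A = (a : ℂ) • 1 := by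
    ext i j
    have h1 : A i j * B 0 0 = if i = j then 1 else 0 := by
      simpa using key i j 0 0
    have h2 : A i j * B 0 0 * A 0 0 = (if i = j then 1 else 0) * A 0 0 := by rw [h1]
    rw [show A i j * B 0 0 * A 0 0 = A i j * (A 0 0 * B 0 0) by ring, h00, mul_one] at h2
    rw [h2, haC]
    by_cases hij : i = j <;> simp [hij, Matrix.one_apply, mul_comm]
  -- B = a⁻¹ • 1
  have hBeq : B = (a : ℂ)⁻¹ • 1 := by
    ext k l
    have h1 : A 0 0 * B k l = if k = l then 1 else 0 := by
      simpa using key 0 0 k l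
    have h2 : (A 0 0)⁻¹ * (A 0 0 * B k l) = (A 0 0)⁻¹ * (if k = l then 1 else 0) := by
      rw [h1]
    rw [← mul_assoc, inv_mul_cancel₀ hA0, one_mul] at h2
    rw [h2, haC]
    by_cases hkl : k = l <;> simp [hkl, Matrix.one_apply]
  refine ⟨a, hapos, ?_, ?_⟩
  · have hs : ((Real.sqrt a : ℂ)) ≠ 0 := by
      simp only [ne_eq, Complex.ofReal_eq_zero]
      positivity
    rw [conjTranspose_smul, Matrix.smul_mul, Matrix.mul_smul, ← hA, hAeq]
    rw [smul_smul, smul_smul]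
    have : (1 / (Real.sqrt a : ℂ)) * star (1 / (Real.sqrt a : ℂ)) * (a : ℂ) = 1 := by
      have hst : star (1 / (Real.sqrt a : ℂ)) = 1 / (Real.sqrt a : ℂ) := by
        simp [Complex.star_def, ← Complex.ofReal_one, ← Complex.ofReal_div]
      rw [hst]
      have hsq : (Real.sqrt a : ℂ) * (Real.sqrt a : ℂ) = (a : ℂ) := by
        rw [← Complex.ofReal_mul, Real.mul_self_sqrt hapos.le]
      field_simp
      rw [sq, hsq]
    rw [this, one_smul]
  · rw [conjTranspose_smul, Matrix.smul_mul, Matrix.mul_smul, ← hB, hBeq]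
    rw [smul_smul, smul_smul]
    have : ((Real.sqrt a : ℂ)) * star ((Real.sqrt a : ℂ)) * (a : ℂ)⁻¹ = 1 := by
      have hst : star ((Real.sqrt a : ℂ)) = ((Real.sqrt a : ℂ)) := by
        simp [Complex.star_def]
      rw [hst, ← Complex.ofReal_mul, Real.mul_self_sqrt hapos.le]
      exact mul_inv_cancel₀ (by exact_mod_cast hapos.ne')
    rw [this, one_smul]
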